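/- Suppose λ : ℝ → ℂ and x : ℝ → E are differentiable at 0, satisfy λ(θ)·x(θ) = θ·L(x(θ)) + (1−θ)·K(x(θ)) for all θ ∈ ℝ, and x(0) = e_i, λ(0) = μ_i for some fixed index i. Then the derivative of λ at 0 equals X_{i,i} − μ_i, i.e. λ′(0) = ⟨L e_i, e_i⟩ − μ_i. -/

import Mathlib

open scoped InnerProductSpace

/-- If `λ : ℝ → ℂ` and `x : ℝ → E` are differentiable at `0`, satisfy
`λ(θ) • x(θ) = θ • L(x θ) + (1-θ) • K(x θ)` for all real `θ`, and `x 0 = e i`,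
`λ 0 = μ i`, then `λ′(0) = X_{i,i} - μ_i = ⟨L e_i, e_i⟩ - μ_i` (inner product
linear in the first argument). -/
theorem deriv_eigenvalue_at_zero {E : Type*} [NormedAddCommGroup E] [InnerProductSpace ℂ E]
    [FiniteDimensional ℂ E] {n : ℕ} (e : OrthonormalBasis (Fin n) ℂ E)
    (K L : E →ₗ[ℂ] E) (μ : Fin n → ℂ) (hK : ∀ k, K (e k) = μ k • e k)
    (lam : ℝ → ℂ) (x : ℝ → E)
    (hlam : DifferentiableAt ℝ lam 0) (hx : DifferentiableAt ℝ x 0)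
    (hlx : ∀ θ : ℝ, lam θ • x θ = (θ : ℂ) • L (x θ) + ((1 : ℂ) - (θ : ℂ)) • K (x θ))
    (i : Fin n) (hx0 : x 0 = e i) (hlam0 : lam 0 = μ i) :
    deriv lam 0 = ⟪e i, L (e i)⟫_ℂ - μ i := by
  set a := deriv lam 0 with ha
  set v := deriv x 0 with hv
  have hlam' : HasDerivAt lam a 0 := hlam.hasDerivAt
  have hx' : HasDerivAt x v 0 := hx.hasDerivAt
  have hθ : HasDerivAt (fun θ : ℝ => (θ : ℂ)) 1 0 := by
    exact Complex.ofRealCLM.hasDerivAt (x := (0 : ℝ))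
  have hLx : HasDerivAt (fun θ : ℝ => L (x θ)) (L v) 0 := by
    have h := (((LinearMap.toContinuousLinearMap L).restrictScalars ℝ).hasFDerivAt
      (x := x 0)).comp_hasDerivAt 0 hx'
    exact h
  have hKx : HasDerivAt (fun θ : ℝ => K (x θ)) (K v) 0 := by
    have h := (((LinearMap.toContinuousLinearMap K).restrictScalars ℝ).hasFDerivAt
      (x := x 0)).comp_hasDerivAt 0 hx'
    exact h
  have hc : HasDerivAt (fun θ : ℝ => (1 : ℂ) - (θ : ℂ)) (-1) 0 := by
    have h := (hasDerivAt_const (0 : ℝ) (1 : ℂ)).sub hθ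
    rw [zero_sub] at h
    exact h
  have hlhs : HasDerivAt (fun θ => lam θ • x θ) _ 0 := hlam'.smul hx'
  have hrhs : HasDerivAt (fun θ : ℝ => (θ : ℂ) • L (x θ) + ((1 : ℂ) - (θ : ℂ)) • K (x θ)) _ 0 :=
    (hθ.smul hLx).add (hc.smul hKx)
  have hfun : (fun θ => lam θ • x θ)
      = fun θ : ℝ => (θ : ℂ) • L (x θ) + ((1 : ℂ) - (θ : ℂ)) • K (x θ) := funext hlx
  rw [hfun] at hlhs
  have heq := hlhs.unique hrhs
  simp only [hx0, hlam0, one_smul, zero_smul, neg_one_smul, sub_zero, zero_add, add_zero,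
    Complex.ofReal_zero] at heq
  have hKinner : ∀ w : E, ⟪e i, K w⟫_ℂ = μ i * ⟪e i, w⟫_ℂ := by
    intro w
    have hw : K w = ∑ k, (e.repr w k * μ k) • e k := by
      conv_lhs => rw [← e.sum_repr w]
      simp [map_sum, map_smul, hK, smul_smul]
    rw [hw, inner_sum]
    have horth := e.orthonormal
    rw [orthonormal_iff_ite] at horth
    simp [inner_smul_right, horth, e.repr_apply_apply, mul_comm]
  have hinner := congrArg (fun w : E => ⟪e i, w⟫_ℂ) heq
  simp only [inner_add_right, inner_smul_right, hKinner, one_smul, zero_smul, neg_smul,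
    inner_neg_right, sub_zero, inner_zero_right, add_zero] at hinner
  have hei : ⟪e i, e i⟫_ℂ = 1 := by
    have horth := e.orthonormal
    rw [orthonormal_iff_ite] at horth
    simp [horth]
  rw [hei] at hinner
  -- hinner : a * 1 + μ i * ⟪e i, v⟫ = ⟪e i, L (e i)⟫ + (-(μ i * 1) + μ i * ⟪e i, v⟫)
  have : a = ⟪e i, L (e i)⟫_ℂ - μ i := by linear_combination hinner
  exact this
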